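/- Let $x,y,z$ be elements of a Coxeter group such that $x$ and $y$ are strongly commutative. If $z \le_L xz$ and $z \le_L yz$, then $z \le_L xyz$. -/

import Mathlib

namespace PaperStmt

open scoped Classical

variable {B : Type*} {W : Type*} [Group W] {M : CoxeterMatrix B}

/-- Bruhat (strong) cover: `v = t * u` for a reflection `t`, with `ℓ v = ℓ u + 1`. -/
def BruhatCov (cs : CoxeterSystem M W) (u v : W) : Prop :=
  cs.length v = cs.length u + 1 ∧ ∃ t : W, cs.IsReflection t ∧ v = t * u

/-- The Bruhat (strong) order, generated by the covering relations. -/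
def BruhatLe (cs : CoxeterSystem M W) : W → W → Prop :=
  Relation.ReflTransGen (BruhatCov cs)

/-- Strict Bruhat order. -/
def BruhatLt (cs : CoxeterSystem M W) (u v : W) : Prop :=
  BruhatLe cs u v ∧ u ≠ v

/-- Left weak order: `u ≤_L v` iff `ℓ(v u⁻¹) + ℓ u = ℓ v`. -/
def leftLe (cs : CoxeterSystem M W) (u v : W) : Prop :=
  cs.length (v * u⁻¹) + cs.length u = cs.length v

/-- Right weak order: `u ≤_R v` iff `ℓ u + ℓ(u⁻¹ v) = ℓ v`. -/
def rightLe (cs : CoxeterSystem M W) (u v : W) : Prop :=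
  cs.length u + cs.length (u⁻¹ * v) = cs.length v

/-- Demazure action of a simple reflection: `φ_s(x) = s x` if `s x > x`, else `x`. -/
noncomputable def phi (cs : CoxeterSystem M W) (i : B) (x : W) : W :=
  if BruhatLt cs x (cs.simple i * x) then cs.simple i * x else x

/-- Anti-Demazure action: `ψ_s(x) = s x` if `s x < x`, else `x`. -/
noncomputable def psi (cs : CoxeterSystem M W) (i : B) (x : W) : W :=
  if BruhatLt cs (cs.simple i * x) x then cs.simple i * x else x

/-- Right anti-Demazure action: `ψ^R_s(x) = x s` if `x s < x`, else `x`. -/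
noncomputable def psiR (cs : CoxeterSystem M W) (i : B) (x : W) : W :=
  if BruhatLt cs (x * cs.simple i) x then x * cs.simple i else x

/-- `φ_w` along a word `w = s_1 ⋯ s_n`: `φ_{s_1} ∘ ⋯ ∘ φ_{s_n}`. -/
noncomputable def phiWord (cs : CoxeterSystem M W) (ω : List B) (x : W) : W :=
  ω.foldr (phi cs) x

/-- `ψ_w` along a word `w = s_1 ⋯ s_n`: `ψ_{s_1} ∘ ⋯ ∘ ψ_{s_n}`. -/
noncomputable def psiWord (cs : CoxeterSystem M W) (ω : List B) (x : W) : W :=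
  ω.foldr (psi cs) x

/-- `ψ^R_w` along a word `w = s_1 ⋯ s_n`: `ψ^R_{s_n} ∘ ⋯ ∘ ψ^R_{s_1}`. -/
noncomputable def psiRWord (cs : CoxeterSystem M W) (ω : List B) (x : W) : W :=
  ω.foldl (fun y i => psiR cs i y) x

/-- `x` and `y` are strongly commutative: any simple reflection appearing in some
reduced expression of `x` and any appearing in some reduced expression of `y`
are distinct and commute. -/
def StronglyCommutative (cs : CoxeterSystem M W) (x y : W) : Prop :=
  ∀ i j : B,
    (∃ ω, cs.IsReduced ω ∧ cs.wordProd ω = x ∧ i ∈ ω) →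
    (∃ ω, cs.IsReduced ω ∧ cs.wordProd ω = y ∧ j ∈ ω) →
    cs.simple i * cs.simple j = cs.simple j * cs.simple i ∧ cs.simple i ≠ cs.simple j

section Aux

variable {B : Type*} {W : Type*} [Group W] {M : CoxeterMatrix B}

lemma conj_simple_cancel (cs : CoxeterSystem M W) (i : B) (u : W) :
    cs.simple i * (cs.simple i * u * cs.simple i) * cs.simple i = u := by
  have h := cs.simple_mul_simple_self i
  calc cs.simple i * (cs.simple i * u * cs.simple i) * cs.simple i
      = (cs.simple i * cs.simple i) * u * (cs.simple i * cs.simple i) := by group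
    _ = u := by rw [h]; group

lemma conj_simple_eq_iff (cs : CoxeterSystem M W) (i : B) (t : W) :
    cs.simple i * t * cs.simple i = cs.simple i ↔ t = cs.simple i := by
  constructor
  · intro hc
    have := congrArg (fun u => cs.simple i * u * cs.simple i) hc
    simpa [conj_simple_cancel] using this
  · rintro rfl
    rw [cs.simple_mul_simple_self, one_mul]

noncomputable def eta (cs : CoxeterSystem M W) (i : B) : Equiv.Perm (W × ℤˣ) :=
  Function.Involutive.toPerm
    (fun x => (cs.simple i * x.1 * cs.simple i, if x.1 = cs.simple i then -x.2 else x.2))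
    (by
      intro x
      obtain ⟨t, ε⟩ := x
      simp only [conj_simple_cancel, conj_simple_eq_iff, Prod.mk.injEq]
      refine ⟨trivial, ?_⟩
      split_ifs <;> simp)

lemma eta_apply (cs : CoxeterSystem M W) (i : B) (t : W) (ε : ℤˣ) :
    eta cs i (t, ε) = (cs.simple i * t * cs.simple i, if t = cs.simple i then -ε else ε) := rfl

lemma sj_conj_pow (cs : CoxeterSystem M W) (i j : B) (k : ℕ) :
    cs.simple j * (cs.simple i * cs.simple j) ^ k =
      ((cs.simple i * cs.simple j) ^ k)⁻¹ * cs.simple j := by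
  induction k with
  | zero => simp
  | succ k ih =>
      have h1 : cs.simple j * (cs.simple i * cs.simple j) =
          (cs.simple i * cs.simple j)⁻¹ * cs.simple j := by
        rw [mul_inv_rev, cs.inv_simple, cs.inv_simple]
        group
      rw [pow_succ, ← mul_assoc, ih, mul_assoc, h1, ← mul_assoc,
        ← inv_pow, ← pow_succ, ← pow_succ, inv_pow]

lemma ite_neg_eq_mul (P : Prop) [Decidable P] (ε : ℤˣ) :
    (if P then -ε else ε) = ε * (if P then -1 else 1) := by
  split_ifs <;> simp

lemma eta_pow (cs : CoxeterSystem M W) (i j : B) (k : ℕ) (t : W) (ε : ℤˣ) :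
    ((eta cs i * eta cs j) ^ k) (t, ε) =
      ((cs.simple i * cs.simple j) ^ k * t * ((cs.simple i * cs.simple j) ^ k)⁻¹,
        ε * ∏ r ∈ Finset.range (2 * k),
          (if t = ((cs.simple i * cs.simple j)⁻¹) ^ r * cs.simple j then (-1 : ℤˣ) else 1)) := by
  induction k with
  | zero => simp
  | succ k ih =>
      have hgen : ∀ (g y u : W), g * u * g⁻¹ = y ↔ u = g⁻¹ * y * g := by
        intro g y u
        constructor
        · intro h; subst h; group
        · intro h; subst h; group
      have hcond1 : (cs.simple i * cs.simple j) ^ k * t * (((cs.simple i * cs.simple j)) ^ k)⁻¹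
            = cs.simple j ↔
          t = ((cs.simple i * cs.simple j)⁻¹) ^ (2 * k) * cs.simple j := by
        rw [hgen]
        have : ((cs.simple i * cs.simple j) ^ k)⁻¹ * cs.simple j * (cs.simple i * cs.simple j) ^ k
            = ((cs.simple i * cs.simple j)⁻¹) ^ (2 * k) * cs.simple j := by
          rw [mul_assoc, sj_conj_pow cs i j k, ← mul_assoc, ← mul_inv_rev, ← pow_add,
            ← inv_pow, two_mul]
        rw [this]
      have hcond2 : cs.simple j *
            ((cs.simple i * cs.simple j) ^ k * t * (((cs.simple i * cs.simple j)) ^ k)⁻¹)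
            * cs.simple j = cs.simple i ↔
          t = ((cs.simple i * cs.simple j)⁻¹) ^ (2 * k + 1) * cs.simple j := by
        have hgen' : ∀ (y u : W), cs.simple j * u * cs.simple j = y ↔
            u = cs.simple j * y * cs.simple j := by
          intro y u
          have h := hgen (cs.simple j) y u
          rwa [cs.inv_simple] at h
        rw [hgen', hgen]
        have hv : ((cs.simple i * cs.simple j) ^ k)⁻¹ *
              (cs.simple j * cs.simple i * cs.simple j) * (cs.simple i * cs.simple j) ^ k
            = ((cs.simple i * cs.simple j)⁻¹) ^ (2 * k + 1) * cs.simple j := by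
          have hv0 : cs.simple j * cs.simple i * cs.simple j =
              (cs.simple i * cs.simple j)⁻¹ * cs.simple j := by
            rw [mul_inv_rev, cs.inv_simple, cs.inv_simple]
          rw [hv0, mul_assoc _ _ ((cs.simple i * cs.simple j) ^ k),
            mul_assoc _ (cs.simple j) _, sj_conj_pow cs i j k, ← mul_assoc, ← mul_assoc]
          simp only [← inv_pow]
          rw [← pow_succ, ← pow_add, show k + 1 + k = 2 * k + 1 by omega]
        rw [hv]
      rw [pow_succ' (eta cs i * eta cs j) k, Equiv.Perm.mul_apply, ih,
        Equiv.Perm.mul_apply, eta_apply, eta_apply, Prod.mk.injEq]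
      constructor
      · rw [pow_succ']
        simp only [mul_inv_rev, cs.inv_simple]
        group
      · simp only [hcond1, hcond2]
        rw [ite_neg_eq_mul, ite_neg_eq_mul,
          show 2 * (k + 1) = (2 * k) + 1 + 1 by ring,
          Finset.prod_range_succ, Finset.prod_range_succ]
        group

lemma eta_liftable (cs : CoxeterSystem M W) : M.IsLiftable (eta cs) := by
  intro i j
  apply Equiv.ext
  rintro ⟨t, ε⟩
  rw [eta_pow]
  have hpow : (cs.simple i * cs.simple j) ^ M i j = 1 := cs.simple_mul_simple_pow i j
  have hper : ∀ r : ℕ,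
      ((cs.simple i * cs.simple j)⁻¹) ^ (M i j + r) = ((cs.simple i * cs.simple j)⁻¹) ^ r := by
    intro r
    rw [pow_add, inv_pow, hpow, inv_one, one_mul]
  have hprod : (∏ r ∈ Finset.range (2 * M i j),
      (if t = ((cs.simple i * cs.simple j)⁻¹) ^ r * cs.simple j then (-1 : ℤˣ) else 1)) = 1 := by
    rw [two_mul, Finset.prod_range_add]
    simp only [hper]
    rw [← sq, Int.units_sq]
  rw [hprod, hpow]
  simp

noncomputable def Phi (cs : CoxeterSystem M W) : W →* Equiv.Perm (W × ℤˣ) :=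
  cs.lift ⟨eta cs, eta_liftable cs⟩

lemma Phi_simple (cs : CoxeterSystem M W) (i : B) : Phi cs (cs.simple i) = eta cs i :=
  cs.lift_apply_simple (eta_liftable cs) i

lemma Phi_count (cs : CoxeterSystem M W) (ω : List B) (t : W) (ε : ℤˣ) :
    Phi cs (cs.wordProd ω)⁻¹ (t, ε) =
      ((cs.wordProd ω)⁻¹ * t * cs.wordProd ω,
       ε * (-1) ^ (List.count t (cs.leftInvSeq ω))) := by
  induction ω generalizing t ε with
  | nil => simp [CoxeterSystem.wordProd_nil]
  | cons i ω ih =>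
    have hlis : cs.leftInvSeq (i :: ω) =
        cs.simple i :: List.map (⇑(MulAut.conj (cs.simple i))) (cs.leftInvSeq ω) := rfl
    have hconj : (MulAut.conj (cs.simple i)) (cs.simple i * t * cs.simple i) = t := by
      rw [MulAut.conj_apply, cs.inv_simple]
      exact conj_simple_cancel cs i t
    have hcmap : List.count t (List.map (⇑(MulAut.conj (cs.simple i))) (cs.leftInvSeq ω)) =
        List.count (cs.simple i * t * cs.simple i) (cs.leftInvSeq ω) := by
      conv_lhs => rw [← hconj]
      exact List.count_map_of_injective _ _ (MulAut.conj (cs.simple i)).injective _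
    rw [cs.wordProd_cons, mul_inv_rev, cs.inv_simple, map_mul, Equiv.Perm.mul_apply,
      Phi_simple, eta_apply, ih, Prod.mk.injEq]
    constructor
    · group
    · rw [hlis, List.count_cons, hcmap]
      rcases eq_or_ne t (cs.simple i) with h | h
      · subst h
        have h2 : cs.simple i * cs.simple i * cs.simple i = cs.simple i := by
          rw [cs.simple_mul_simple_self, one_mul]
        rw [h2]
        simp [pow_succ]
      · simp [h, Ne.symm h]

lemma count_parity (cs : CoxeterSystem M W) (ω₁ ω₂ : List B)
    (h : cs.wordProd ω₁ = cs.wordProd ω₂) (t : W) :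
    ((-1 : ℤˣ)) ^ (List.count t (cs.leftInvSeq ω₁)) =
      (-1) ^ (List.count t (cs.leftInvSeq ω₂)) := by
  have h1 := Phi_count cs ω₁ t 1
  rw [h, Phi_count cs ω₂ t 1] at h1
  have := (Prod.mk.injEq _ _ _ _).mp h1
  simpa using this.2.symm

lemma simple_mem_leftInvSeq_of_descent (cs : CoxeterSystem M W) {i : B} {ω : List B}
    (hr : cs.IsReduced ω)
    (hd : cs.length (cs.simple i * cs.wordProd ω) < cs.length (cs.wordProd ω)) :
    cs.simple i ∈ cs.leftInvSeq ω := by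
  obtain ⟨ω₀, hω₀red, hω₀⟩ := cs.exists_reduced_word' (cs.simple i * cs.wordProd ω)
  have hprod : cs.wordProd (i :: ω₀) = cs.wordProd ω := by
    rw [cs.wordProd_cons, ← hω₀, CoxeterSystem.simple_mul_simple_cancel_left]
  have h0 : cs.simple i ∉ cs.leftInvSeq ω₀ := by
    intro hmem
    have hinv := cs.isLeftInversion_of_mem_leftInvSeq hω₀red hmem
    rw [← hω₀] at hinv
    have := hinv.2
    rw [CoxeterSystem.simple_mul_simple_cancel_left] at this
    omega
  have hcount0 : List.count (cs.simple i) (cs.leftInvSeq ω₀) = 0 :=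
    List.count_eq_zero_of_not_mem h0
  have hconj : (MulAut.conj (cs.simple i)) (cs.simple i) = cs.simple i := by
    rw [MulAut.conj_apply, cs.inv_simple, cs.simple_mul_simple_self, one_mul]
  have hcmap : List.count (cs.simple i)
      (List.map (⇑(MulAut.conj (cs.simple i))) (cs.leftInvSeq ω₀)) = 0 := by
    have h5 := List.count_map_of_injective (cs.leftInvSeq ω₀) (⇑(MulAut.conj (cs.simple i)))
      (MulAut.conj (cs.simple i)).injective (cs.simple i)
    rw [hconj] at h5
    rw [h5]
    exact hcount0
  have hlis : cs.leftInvSeq (i :: ω₀) =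
      cs.simple i :: List.map (⇑(MulAut.conj (cs.simple i))) (cs.leftInvSeq ω₀) := rfl
  have hcnt1 : List.count (cs.simple i) (cs.leftInvSeq (i :: ω₀)) = 1 := by
    rw [hlis, List.count_cons, hcmap]
    simp
  have hpar := count_parity cs (i :: ω₀) ω hprod (cs.simple i)
  rw [hcnt1] at hpar
  by_contra hmem
  rw [List.count_eq_zero_of_not_mem hmem] at hpar
  simp at hpar

lemma commSwap (cs : CoxeterSystem M W) {i j : B}
    (hcomm : cs.simple i * cs.simple j = cs.simple j * cs.simple i)
    (hne : cs.simple i ≠ cs.simple j) (w : W)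
    (hi : cs.length (cs.simple i * w) = cs.length w + 1)
    (hj : cs.length (cs.simple j * w) = cs.length w + 1) :
    cs.length (cs.simple i * (cs.simple j * w)) = cs.length w + 2 := by
  rcases cs.length_simple_mul (cs.simple j * w) i with h | h
  · rw [h, hj]
  · exfalso
    rw [hj] at h
    -- h : ℓ (s i * (s j * w)) + 1 = ℓ w + 1, so descent
    obtain ⟨ω, hred, hw⟩ := cs.exists_reduced_word' w
    have hlw : cs.length w = ω.length := by rw [hw]; exact hred
    have hredj : cs.IsReduced (j :: ω) := by
      show cs.length (cs.wordProd (j :: ω)) = (j :: ω).length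
      rw [cs.wordProd_cons, ← hw, List.length_cons, hj, hlw]
    have hdesc : cs.length (cs.simple i * cs.wordProd (j :: ω)) <
        cs.length (cs.wordProd (j :: ω)) := by
      rw [cs.wordProd_cons, ← hw, hj]
      omega
    have hmem := simple_mem_leftInvSeq_of_descent cs hredj hdesc
    have hlis : cs.leftInvSeq (j :: ω) =
        cs.simple j :: List.map (⇑(MulAut.conj (cs.simple j))) (cs.leftInvSeq ω) := rfl
    rw [hlis] at hmem
    rcases List.mem_cons.mp hmem with h1 | h1
    · exact hne h1
    · obtain ⟨u, humem, huconj⟩ := List.mem_map.mp h1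
      have hu : u = cs.simple i := by
        rw [MulAut.conj_apply, cs.inv_simple] at huconj
        have := congrArg (fun v => cs.simple j * v * cs.simple j) huconj
        rw [conj_simple_cancel] at this
        rw [this, ← hcomm, mul_assoc, cs.simple_mul_simple_self, mul_one]
      rw [hu] at humem
      have hinv := cs.isLeftInversion_of_mem_leftInvSeq hred humem
      rw [← hw] at hinv
      have := hinv.2
      omega

lemma lemA (cs : CoxeterSystem M W) (k : B) (ω : List B) :
    ∀ z : W,
      (∀ i ∈ ω, cs.simple i * cs.simple k = cs.simple k * cs.simple i ∧
        cs.simple i ≠ cs.simple k) →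
      cs.length (cs.simple k * z) = cs.length z + 1 →
      cs.length (cs.wordProd ω * z) = ω.length + cs.length z →
      cs.length (cs.simple k * (cs.wordProd ω * z)) = cs.length (cs.wordProd ω * z) + 1 := by
  induction ω with
  | nil =>
      intro z _ hz hxz
      simpa [cs.wordProd_nil] using hz
  | cons i ω ih =>
      intro z hC hz hxz
      have hi_mem := hC i List.mem_cons_self
      have hrw : cs.wordProd (i :: ω) * z = cs.simple i * (cs.wordProd ω * z) := by
        rw [cs.wordProd_cons, mul_assoc]
      have hup : cs.length (cs.wordProd ω * z) ≤ ω.length + cs.length z := by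
        calc cs.length (cs.wordProd ω * z) ≤ cs.length (cs.wordProd ω) + cs.length z :=
              cs.length_mul_le _ _
          _ ≤ ω.length + cs.length z := by
              have := cs.length_wordProd_le ω
              omega
      have hxz2 : cs.length (cs.simple i * (cs.wordProd ω * z)) =
          ω.length + 1 + cs.length z := by
        rw [← hrw]
        simpa [List.length_cons] using hxz
      have hxz' : cs.length (cs.wordProd ω * z) = ω.length + cs.length z := by
        rcases cs.length_simple_mul (cs.wordProd ω * z) i with hc | hc <;> omega
      have hk := ih z (fun a ha => hC a (List.mem_cons_of_mem _ ha)) hz hxz'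
      have hcs := commSwap cs hi_mem.1 hi_mem.2 (cs.wordProd ω * z)
        (by omega) (by omega)
      have hrw2 : cs.simple k * (cs.wordProd (i :: ω) * z) =
          cs.simple i * (cs.simple k * (cs.wordProd ω * z)) := by
        rw [hrw, ← mul_assoc, ← hi_mem.1, mul_assoc]
      rw [hrw2, hcs, hrw, hxz2]
      omega

lemma wordProd_comm (cs : CoxeterSystem M W) (ω : List B) (u : W)
    (h : ∀ i ∈ ω, cs.simple i * u = u * cs.simple i) :
    cs.wordProd ω * u = u * cs.wordProd ω := by
  induction ω with
  | nil => simp [cs.wordProd_nil]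
  | cons i ω ih =>
      rw [cs.wordProd_cons, mul_assoc, ih (fun a ha => h a (List.mem_cons_of_mem _ ha)),
        ← mul_assoc, h i List.mem_cons_self, mul_assoc]

lemma keyLem (cs : CoxeterSystem M W) (ωx : List B) (ωy : List B) :
    (∀ i ∈ ωx, ∀ j ∈ ωy, cs.simple i * cs.simple j = cs.simple j * cs.simple i ∧
      cs.simple i ≠ cs.simple j) →
    ∀ z : W,
      cs.length (cs.wordProd ωx * z) = ωx.length + cs.length z →
      cs.length (cs.wordProd ωy * z) = ωy.length + cs.length z →
      cs.length (cs.wordProd ωx * cs.wordProd ωy * z) =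
        ωx.length + ωy.length + cs.length z := by
  induction ωy using List.reverseRecOn with
  | nil =>
      intro _ z hxz _
      simpa [cs.wordProd_nil] using hxz
  | append_singleton ω j ih =>
      intro hC z hxz hyz
      have happ : cs.wordProd (ω ++ [j]) = cs.wordProd ω * cs.simple j := by
        rw [cs.wordProd_append, cs.wordProd_singleton]
      have hyz2 : cs.length (cs.wordProd ω * (cs.simple j * z)) =
          ω.length + 1 + cs.length z := by
        rw [← mul_assoc, ← happ]
        simpa using hyz
      have hupω : cs.length (cs.wordProd ω * (cs.simple j * z)) ≤
          ω.length + cs.length (cs.simple j * z) := by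
        calc cs.length (cs.wordProd ω * (cs.simple j * z))
            ≤ cs.length (cs.wordProd ω) + cs.length (cs.simple j * z) := cs.length_mul_le _ _
          _ ≤ ω.length + cs.length (cs.simple j * z) := by
              have := cs.length_wordProd_le ω
              omega
      have hzj : cs.length (cs.simple j * z) = cs.length z + 1 := by
        rcases cs.length_simple_mul z j with hc | hc <;> omega
      have hyz' : cs.length (cs.wordProd ω * (cs.simple j * z)) =
          ω.length + cs.length (cs.simple j * z) := by omega
      have hcommj : cs.wordProd ωx * cs.simple j = cs.simple j * cs.wordProd ωx :=
        wordProd_comm cs ωx (cs.simple j)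
          (fun a ha => (hC a ha j (by simp)).1)
      have hxzj : cs.length (cs.wordProd ωx * (cs.simple j * z)) =
          ωx.length + cs.length (cs.simple j * z) := by
        have hrw : cs.wordProd ωx * (cs.simple j * z) =
            cs.simple j * (cs.wordProd ωx * z) := by
          rw [← mul_assoc, hcommj, mul_assoc]
        have hA := lemA cs j ωx z (fun a ha => hC a ha j (by simp)) hzj hxz
        rw [hrw, hA, hxz, hzj]
        omega
      have hih := ih (fun a ha b hb => hC a ha b (List.mem_append_left _ hb))
        (cs.simple j * z) hxzj hyz'
      have hfinal : cs.wordProd ωx * cs.wordProd (ω ++ [j]) * z =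
          cs.wordProd ωx * cs.wordProd ω * (cs.simple j * z) := by
        rw [happ]
        group
      rw [hfinal, hih, hzj]
      simp only [List.length_append, List.length_singleton]
      omega

end Aux

theorem stmt15 (cs : CoxeterSystem M W) (x y z : W)
    (h : StronglyCommutative cs x y)
    (h1 : leftLe cs z (x * z)) (h2 : leftLe cs z (y * z)) :
    leftLe cs z (x * y * z) := by
  
  unfold leftLe at h1 h2 ⊢
  rw [mul_inv_cancel_right] at h1 h2 ⊢
  obtain ⟨ωx, hxred, hxw⟩ := cs.exists_reduced_word' x
  obtain ⟨ωy, hyred, hyw⟩ := cs.exists_reduced_word' y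
  have hC : ∀ i ∈ ωx, ∀ j ∈ ωy,
      cs.simple i * cs.simple j = cs.simple j * cs.simple i ∧ cs.simple i ≠ cs.simple j :=
    fun i hi j hj => h i j ⟨ωx, hxred, hxw.symm, hi⟩ ⟨ωy, hyred, hyw.symm, hj⟩
  have hlx : cs.length x = ωx.length := by rw [hxw]; exact hxred
  have hly : cs.length y = ωy.length := by rw [hyw]; exact hyred
  have k1 : cs.length (x * y * z) = ωx.length + ωy.length + cs.length z := by
    have hk := keyLem cs ωx ωy hC z
      (by rw [← hxw]; omega) (by rw [← hyw]; omega)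
    rw [← hxw, ← hyw] at hk
    exact hk
  have k2 : cs.length (x * y) = ωx.length + ωy.length := by
    have hk := keyLem cs ωx ωy hC 1
      (by rw [← hxw]; simpa using hlx) (by rw [← hyw]; simpa using hly)
    rw [← hxw, ← hyw] at hk
    simpa using hk
  omega
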